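/- Let X be a δ-hyperbolic geodesic metric space and S a finite subset. Then r_p(S) ≤ (1/2) d_{p+1}(S) + δ for every positive integer p. -/

import Mathlib

/-- A geodesic from `x` to `y`, parametrized by arc length on `[0, dist x y]`. -/
def IsGeodesicFrom {X : Type*} [MetricSpace X] (γ : ℝ → X) (x y : X) : Prop :=
  γ 0 = x ∧ γ (dist x y) = y ∧
    ∀ s ∈ Set.Icc (0 : ℝ) (dist x y), ∀ t ∈ Set.Icc (0 : ℝ) (dist x y),
      dist (γ s) (γ t) = |s - t|

/-- A geodesic metric space: every pair of points is joined by a geodesic. -/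
def GeodesicMS (X : Type*) [MetricSpace X] : Prop :=
  ∀ x y : X, ∃ γ : ℝ → X, IsGeodesicFrom γ x y

/-- Thin-triangle (insize) δ-hyperbolicity: in every geodesic triangle, points at equal
parameter (up to the internal distance) on the two sides from a common vertex are within δ. -/
def ThinTriangles (X : Type*) [MetricSpace X] (δ : ℝ) : Prop :=
  ∀ (x y z : X) (f g h : ℝ → X),
    IsGeodesicFrom f x y → IsGeodesicFrom g x z → IsGeodesicFrom h y z →
    (∀ t ∈ Set.Icc (0 : ℝ) ((dist x y + dist x z - dist y z) / 2),
        dist (f t) (g t) ≤ δ) ∧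
    (∀ t ∈ Set.Icc (0 : ℝ) ((dist x y + dist y z - dist x z) / 2),
        dist (f (dist x y - t)) (h t) ≤ δ) ∧
    (∀ t ∈ Set.Icc (0 : ℝ) ((dist x z + dist y z - dist x y) / 2),
        dist (g (dist x z - t)) (h (dist y z - t)) ≤ δ)
def Dominates {X : Type*} [MetricSpace X] (r : ℝ) (C S : Set X) : Prop :=
  ∀ s ∈ S, ∃ c ∈ C, dist s c ≤ r

/-- The p-radius of `S`: the infimum of `r` such that some set of at most `p` points
of the ambient space r-dominates `S`. -/
noncomputable def pRadius {X : Type*} [MetricSpace X] (p : ℕ) (S : Set X) : ℝ :=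
  sInf {r : ℝ | ∃ C : Finset X, C.card ≤ p ∧ Dominates r (↑C) S}

/-- The q-diameter of `S`: the supremum of `r` such that some set of at least `q`
points of `S` is an `r`-dispersion (pairwise distances at least `r`). -/
noncomputable def pDiam {X : Type*} [MetricSpace X] (q : ℕ) (S : Set X) : ℝ :=
  sSup {r : ℝ | ∃ D : Finset X, ↑D ⊆ S ∧ q ≤ D.card ∧
    (D : Set X).Pairwise fun u v => r ≤ dist u v}

-- Key geometric lemma
lemma key_cover {X : Type*} [MetricSpace X] {δ : ℝ}
    (hgeo : GeodesicMS X) (hthin : ThinTriangles X δ)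
    {x y s : X} {f : ℝ → X} (hf : IsGeodesicFrom f x y) {d : ℝ} (hd : 0 ≤ d)
    (hxs : dist x s ≤ dist x y) (hsy : dist s y ≤ d) :
    dist s (f (dist x y - min (d / 2) (dist x y))) ≤ d / 2 + δ := by
  obtain ⟨g, hg⟩ := hgeo x s
  obtain ⟨h, hh⟩ := hgeo y s
  obtain ⟨H1, H2, -⟩ := hthin x y s f g h hf hg hh
  have hD0 : (0:ℝ) ≤ dist x y := dist_nonneg
  have ha0 : (0:ℝ) ≤ dist x s := dist_nonneg
  have hb0 : (0:ℝ) ≤ dist y s := dist_nonneg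
  have hab : dist x y ≤ dist x s + dist y s := by
    have := dist_triangle x s y
    rw [dist_comm s y] at this; linarith
  have hba : dist y s ≤ dist x y + dist x s := by
    have := dist_triangle y x s
    rw [dist_comm y x] at this; linarith
  have hby : dist y s ≤ d := by rw [dist_comm]; exact hsy
  set t0 := min (d / 2) (dist x y) with ht0def
  have ht00 : 0 ≤ t0 := le_min (by linarith) hD0
  have ht0D : t0 ≤ dist x y := min_le_right _ _
  have ht0d : t0 ≤ d / 2 := min_le_left _ _
  by_cases hc : t0 ≤ (dist x y + dist y s - dist x s) / 2
  · have hδ2 := H2 t0 ⟨ht00, hc⟩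
    have ht0b : t0 ≤ dist y s := by linarith
    have hhs : dist (h t0) s = dist y s - t0 := by
      have e := hh.2.2 t0 ⟨ht00, ht0b⟩ (dist y s) ⟨hb0, le_refl _⟩
      rw [hh.2.1] at e
      rw [e, abs_of_nonpos (by linarith)]; ring
    have hble : dist y s - t0 ≤ d / 2 := by
      rcases min_cases (d / 2) (dist x y) with ⟨he, hle⟩ | ⟨he, hlt⟩ <;>
        rw [ht0def, he] <;> linarith
    calc dist s (f (dist x y - t0))
        ≤ dist s (h t0) + dist (h t0) (f (dist x y - t0)) := dist_triangle _ _ _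
      _ ≤ (dist y s - t0) + δ := by
          rw [dist_comm s (h t0), dist_comm (h t0) (f (dist x y - t0))]
          exact add_le_add (le_of_eq hhs) hδ2
      _ ≤ d / 2 + δ := by linarith
  · push_neg at hc
    have h1 := H1 (dist x y - t0) ⟨by linarith, by linarith⟩
    have hDta : dist x y - t0 ≤ dist x s := by linarith
    have hgs : dist (g (dist x y - t0)) s = dist x s - (dist x y - t0) := by
      have e := hg.2.2 (dist x y - t0) ⟨by linarith, hDta⟩ (dist x s) ⟨ha0, le_refl _⟩
      rw [hg.2.1] at e
      rw [e, abs_of_nonpos (by linarith)]; ring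
    calc dist s (f (dist x y - t0))
        ≤ dist s (g (dist x y - t0)) + dist (g (dist x y - t0)) (f (dist x y - t0)) :=
          dist_triangle _ _ _
      _ ≤ (dist x s - (dist x y - t0)) + δ := by
          rw [dist_comm s (g (dist x y - t0)), dist_comm (g _) (f _)]
          exact add_le_add (le_of_eq hgs) h1
      _ ≤ d / 2 + δ := by linarith

lemma cover_lemma {X : Type*} [MetricSpace X] {δ : ℝ} (hδ : 0 ≤ δ)
    (hgeo : GeodesicMS X) (hthin : ThinTriangles X δ) :
    ∀ (p : ℕ) (S : Finset X) (d : ℝ), 0 ≤ d →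
      (¬ ∃ D : Finset X, ↑D ⊆ (↑S : Set X) ∧ p + 1 ≤ D.card ∧
        (↑D : Set X).Pairwise fun u v => d < dist u v) →
      ∃ C : Finset X, C.card ≤ p ∧ Dominates (d / 2 + δ) (↑C : Set X) (↑S : Set X) := by
  classical
  intro p
  induction p with
  | zero =>
    intro S d hd hno
    rcases S.eq_empty_or_nonempty with rfl | ⟨s, hs⟩
    · exact ⟨∅, by simp, fun s hs => by simp at hs⟩
    · exact absurd ⟨{s}, by simpa using hs, by simp, by simp⟩ hno
  | succ p ih =>
    intro S d hd hno
    rcases S.eq_empty_or_nonempty with rfl | hS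
    · exact ⟨∅, by simp, fun s hs => by simp at hs⟩
    obtain ⟨x, hx⟩ := hS
    obtain ⟨y, hy, hymax⟩ := S.exists_max_image (fun s => dist x s) ⟨x, hx⟩
    obtain ⟨f, hf⟩ := hgeo x y
    set c := f (dist x y - min (d / 2) (dist x y)) with hc
    set S'' := S.filter (fun s => d < dist s y) with hS''
    have hno'' : ¬ ∃ D : Finset X, ↑D ⊆ (↑S'' : Set X) ∧ p + 1 ≤ D.card ∧
        (↑D : Set X).Pairwise fun u v => d < dist u v := by
      rintro ⟨D, hDsub, hDcard, hDpair⟩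
      have hyD : y ∉ D := by
        intro hyD
        have := hDsub hyD
        rw [Finset.mem_coe, hS'', Finset.mem_filter] at this
        simp at this
        linarith [this.2]
      refine hno ⟨insert y D, ?_, ?_, ?_⟩
      · rw [Finset.coe_insert]
        refine Set.insert_subset (by exact_mod_cast hy) ?_
        intro u hu
        have := hDsub hu
        rw [Finset.mem_coe, hS'', Finset.mem_filter] at this
        exact this.1
      · rw [Finset.card_insert_of_notMem hyD]; omega
      · rw [Finset.coe_insert]
        refine (@Set.pairwise_insert_of_symm _ (fun u v => d < dist u v) _ _ ⟨?_⟩).mpr ⟨hDpair, ?_⟩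
        · intro u v huv; rwa [dist_comm]
        · intro b hb _
          have := hDsub hb
          rw [Finset.mem_coe, hS'', Finset.mem_filter] at this
          rw [dist_comm]; exact this.2
    obtain ⟨C'', hC''card, hC''dom⟩ := ih S'' d hd hno''
    refine ⟨insert c C'', ?_, ?_⟩
    · calc (insert c C'').card ≤ C''.card + 1 := Finset.card_insert_le _ _
        _ ≤ p + 1 := by omega
    · intro s hs
      by_cases hb : dist s y ≤ d
      · refine ⟨c, by simp, ?_⟩
        exact key_cover hgeo hthin hf hd (hymax s (by exact_mod_cast hs)) hb
      · push_neg at hb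
        obtain ⟨c', hc', hdc'⟩ := hC''dom s (by
          rw [Finset.mem_coe, hS'', Finset.mem_filter]
          exact ⟨by exact_mod_cast hs, hb⟩)
        exact ⟨c', by simp [Finset.mem_insert]; right; exact_mod_cast hc', hdc'⟩

/-- Chepoi–Estellon: in a δ-hyperbolic geodesic metric space, for every finite subset `S`
and every `p ≥ 1`, `r_p(S) ≤ d_{p+1}(S)/2 + δ`. -/
theorem chepoi_estellon {X : Type*} [MetricSpace X] {δ : ℝ} (hδ : 0 ≤ δ)
    (hgeo : GeodesicMS X) (hthin : ThinTriangles X δ)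
    (S : Finset X) (hS : S.Nonempty) (p : ℕ) (hp : 1 ≤ p) :
    pRadius p (↑S : Set X) ≤ (1 / 2) * pDiam (p + 1) (↑S : Set X) + δ := by
  classical
  -- the set defining pDiam
  set T := {r : ℝ | ∃ D : Finset X, ↑D ⊆ (↑S : Set X) ∧ p + 1 ≤ D.card ∧
    (D : Set X).Pairwise fun u v => r ≤ dist u v} with hT
  -- bounded above
  obtain ⟨M, hM⟩ := Metric.isBounded_iff.mp S.finite_toSet.isBounded
  have hTbdd : BddAbove T := by
    refine ⟨M, fun r hr => ?_⟩
    obtain ⟨D, hDsub, hDcard, hDpair⟩ := hr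
    have h2 : 1 < D.card := by omega
    obtain ⟨u, hu, v, hv, huv⟩ := Finset.one_lt_card.mp h2
    have := hDpair (Finset.mem_coe.mpr hu) (Finset.mem_coe.mpr hv) huv
    exact le_trans this (hM (hDsub hu) (hDsub hv))
  set d := pDiam (p + 1) (↑S : Set X) with hd
  have hd0 : 0 ≤ d := by
    rcases Set.eq_empty_or_nonempty T with hTe | hTne
    · rw [hd, pDiam, ← hT, hTe, Real.sSup_empty]
    · obtain ⟨r0, hr0⟩ := hTne
      obtain ⟨D, hDsub, hDcard, _⟩ := hr0
      have : (0:ℝ) ∈ T := ⟨D, hDsub, hDcard, fun u _ v _ _ => dist_nonneg⟩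
      exact le_csSup hTbdd this
  have hno : ¬ ∃ D : Finset X, ↑D ⊆ (↑S : Set X) ∧ p + 1 ≤ D.card ∧
      (↑D : Set X).Pairwise fun u v => d < dist u v := by
    rintro ⟨D, hDsub, hDcard, hDpair⟩
    have h2 : (D.offDiag).Nonempty := by
      obtain ⟨u, hu, v, hv, huv⟩ := Finset.one_lt_card.mp (by omega : 1 < D.card)
      exact ⟨(u, v), Finset.mem_offDiag.mpr ⟨hu, hv, huv⟩⟩
    obtain ⟨⟨u0, v0⟩, huv0, hmin⟩ := D.offDiag.exists_min_image (fun q => dist q.1 q.2) h2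
    rw [Finset.mem_offDiag] at huv0
    have hr : d < dist u0 v0 := hDpair (Finset.mem_coe.mpr huv0.1) (Finset.mem_coe.mpr huv0.2.1) huv0.2.2
    have hmem : dist u0 v0 ∈ T := by
      refine ⟨D, hDsub, hDcard, fun u hu v hv huv => ?_⟩
      exact hmin (u, v) (Finset.mem_offDiag.mpr ⟨Finset.mem_coe.mp hu, Finset.mem_coe.mp hv, huv⟩)
    have : dist u0 v0 ≤ d := le_csSup hTbdd hmem
    linarith
  obtain ⟨C, hCcard, hCdom⟩ := cover_lemma hδ hgeo hthin p S d hd0 hno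
  have hmem : d / 2 + δ ∈ {r : ℝ | ∃ C : Finset X, C.card ≤ p ∧ Dominates r (↑C) (↑S : Set X)} :=
    ⟨C, hCcard, hCdom⟩
  have hbdd : BddBelow {r : ℝ | ∃ C : Finset X, C.card ≤ p ∧ Dominates r (↑C) (↑S : Set X)} := by
    refine ⟨0, fun r hr => ?_⟩
    obtain ⟨C', _, hdom⟩ := hr
    obtain ⟨s0, hs0⟩ := hS
    obtain ⟨c, _, hc⟩ := hdom s0 (by exact_mod_cast hs0)
    exact le_trans dist_nonneg hc
  have := csInf_le hbdd hmem
  rw [pRadius]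
  calc sInf {r : ℝ | ∃ C : Finset X, C.card ≤ p ∧ Dominates r (↑C) (↑S : Set X)}
      ≤ d / 2 + δ := this
    _ = (1 / 2) * d + δ := by ring
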